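/- Let p ≠ 5 be a prime with p ≢ 1 (mod 5), let θ be a nontrivial additive character of F_p with values in ℂ, and let T be a generator of the group of multiplicative characters of F_p. Then, as complex numbers, Σ_{y∈F_p, y≠0} Σ θ(y·(x_1^5 + x_2^5 + x_3^5 + x_4^5 + x_5^5 − 5·x_1x_2x_3x_4x_5)) = Σ_{e=0}^{p−2} g(T^{−e})^5·g(T^{5e})·T^{−5e}(−5), where the inner sum on the left runs over all tuples (x_1, x_2, x_3, x_4, x_5) with every x_i ∈ F_p nonzero. -/

import Mathlib

open Finset

private lemma sum_nonzero_eq_sum_units (p : ℕ) [Fact p.Prime] (f : ZMod p → ℂ) :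
    ∑ y ∈ Finset.univ.filter (fun y : ZMod p => y ≠ 0), f y = ∑ u : (ZMod p)ˣ, f ↑u := by
  refine Finset.sum_bij' (fun y hy => Units.mk0 y (by simpa using (Finset.mem_filter.mp hy).2))
    (fun u _ => (u : ZMod p)) ?_ ?_ ?_ ?_ ?_ <;> simp

set_option maxHeartbeats 1000000

/-- For a prime `p ≠ 5` with `p ≢ 1 (mod 5)`, a nontrivial additive character `θ` and a
generator `T` of the character group,
`Σ_{y ≠ 0} Σ_{xᵢ ∈ F_p*} θ(y(x₁⁵+⋯+x₅⁵ − 5x₁x₂x₃x₄x₅))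
  = Σ_{e=0}^{p-2} g(T^{-e})⁵ g(T^{5e}) T^{-5e}(-5)`. -/
theorem sum_theta_quintic_eq_gaussSums (p : ℕ) [Fact p.Prime] (hp5 : p ≠ 5) (hp : p % 5 ≠ 1)
    (θ : AddChar (ZMod p) ℂ) (hθ : θ ≠ 1)
    (T : MulChar (ZMod p) ℂ) (hT : ∀ χ : MulChar (ZMod p) ℂ, ∃ k : ℕ, χ = T ^ k) :
    ∑ y ∈ Finset.univ.filter (fun y : ZMod p => y ≠ 0),
        ∑ x : Fin 5 → (ZMod p)ˣ,
          θ (y * (∑ i, ((x i : ZMod p)) ^ 5 - 5 * ∏ i, (x i : ZMod p))) =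
      ∑ e ∈ Finset.range (p - 1),
        gaussSum (T ^ (-(e : ℤ))) θ ^ 5 * gaussSum (T ^ (5 * e)) θ *
          (T ^ (-(5 * (e : ℤ)))) (-5 : ZMod p) := by
  have hp2 : 2 ≤ p := (Fact.out : p.Prime).two_le
  set q : ℕ := p - 1 with hq
  have hq1 : 1 ≤ q := by omega
  have hq0 : q ≠ 0 := by omega
  haveI : NeZero q := ⟨hq0⟩
  -- coprimality of 5 and q
  have hcop : Nat.Coprime 5 q := by
    have h5 : Nat.Prime 5 := by norm_num
    refine (Nat.Prime.coprime_iff_not_dvd h5).mpr ?_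
    intro hdvd
    exact hp (by omega)
  -- the inverse of 5 mod q
  obtain ⟨m, hm5'⟩ : ∃ m : ℕ, 5 * m ≡ 1 [MOD q] := by
    rcases Nat.eq_or_lt_of_le hq1 with h1 | h1
    · exact ⟨1, by simp [← h1, Nat.modEq_one]⟩
    · obtain ⟨mm, -, hmm⟩ := Nat.exists_mul_mod_eq_one_of_coprime hcop h1
      refine ⟨mm, ?_⟩
      show 5 * mm % q = 1 % q
      rw [hmm, Nat.mod_eq_of_lt h1]
  have hm5c : (5 : ZMod q) * (m : ZMod q) = 1 := by
    have h1 := (ZMod.natCast_eq_natCast_iff (5 * m) 1 q).mpr hm5'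
    push_cast at h1
    simpa using h1
  -- basic facts on T
  have hcard : Fintype.card (ZMod p)ˣ = q := ZMod.card_units p
  have hu_pow : ∀ u : (ZMod p)ˣ, u ^ q = 1 := fun u => by rw [← hcard]; exact pow_card_eq_one
  have hTvq : ∀ u : (ZMod p)ˣ, (T ↑u) ^ q = 1 := fun u => by
    rw [← map_pow, ← Units.val_pow_eq_pow_val, hu_pow, Units.val_one, map_one]
  have hTne : ∀ u : (ZMod p)ˣ, T ↑u ≠ 0 := fun u h => by
    have h1 : T ↑u * T ↑u⁻¹ = 1 := by
      rw [← map_mul, ← Units.val_mul, mul_inv_cancel, Units.val_one, map_one]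
    rw [h, zero_mul] at h1
    exact zero_ne_one h1
  have hTinv : ∀ u : (ZMod p)ˣ, T ↑u⁻¹ = (T ↑u) ^ (q - 1) := fun u => by
    have h1 : T ↑u⁻¹ * T ↑u = 1 := by
      rw [← map_mul, ← Units.val_mul, inv_mul_cancel, Units.val_one, map_one]
    have h2 : (T ↑u) ^ (q - 1) * T ↑u = 1 := by
      rw [← pow_succ, show q - 1 + 1 = q by omega, hTvq]
    exact mul_right_cancel₀ (hTne u) (h1.trans h2.symm)
  have hTq : T ^ q = 1 := by
    apply MulChar.ext
    intro a
    rw [MulChar.pow_apply_coe, MulChar.one_apply_coe, hTvq]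
  have hTmod : ∀ a : ℕ, T ^ a = T ^ (a % q) := fun a => by
    conv_lhs => rw [← Nat.div_add_mod a q]
    rw [pow_add, pow_mul, hTq, one_pow, one_mul]
  have hTcast : ∀ a b : ℕ, ((a : ZMod q) = (b : ZMod q)) → T ^ a = T ^ b := by
    intro a b h
    have hmeq : a % q = b % q := (ZMod.natCast_eq_natCast_iff a b q).mp h
    rw [hTmod a, hTmod b, hmeq]
  have hzmod : ∀ z : ℂ, z ^ q = 1 → ∀ a b : ℕ, a ≡ b [MOD q] → z ^ a = z ^ b := by
    intro z hz a b hmeq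
    have hzm : ∀ a : ℕ, z ^ a = z ^ (a % q) := fun a => by
      conv_lhs => rw [← Nat.div_add_mod a q]
      rw [pow_add, pow_mul, hz, one_pow, one_mul]
    have hmeq' : a % q = b % q := hmeq
    rw [hzm a, hzm b, hmeq']
  have hq2 : ((q - 1 : ℕ) : ZMod q) = -1 := by
    rw [Nat.cast_sub hq1, ZMod.natCast_self, Nat.cast_one, zero_sub]
  -- separation of points
  haveI : NeZero (Monoid.exponent (ZMod p)ˣ) := ⟨Monoid.exponent_ne_zero_of_finite⟩
  have hsep : ∀ u : (ZMod p)ˣ, T ↑u = 1 → u = 1 := by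
    intro u h
    by_contra hne
    have hun : (↑u : ZMod p) ≠ 1 := fun h' => hne (Units.ext h')
    obtain ⟨χ, hχ⟩ := MulChar.exists_apply_ne_one_of_hasEnoughRootsOfUnity (ZMod p) ℂ hun
    obtain ⟨k, rfl⟩ := hT χ
    rw [MulChar.pow_apply_coe, h, one_pow] at hχ
    exact hχ rfl
  -- geometric sum
  have hgeom : ∀ z : ℂ, z ^ q = 1 → z ≠ 1 → ∑ e ∈ range q, z ^ e = 0 := fun z hzq hz => by
    rw [geom_sum_eq hz, hzq, sub_self, zero_div]
  -- Gauss sums as sums over units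
  have hgU : ∀ χ : MulChar (ZMod p) ℂ, gaussSum χ θ = ∑ u : (ZMod p)ˣ, χ ↑u * θ ↑u := by
    intro χ
    rw [gaussSum, ← Finset.sum_filter_of_ne (p := fun x : ZMod p => x ≠ 0) ?side,
      sum_nonzero_eq_sum_units p]
    case side =>
      intro x _ h
      intro h0
      subst h0
      exact h (by rw [MulChar.map_nonunit χ not_isUnit_zero, zero_mul])
  -- Step 1 : orthogonality
  have hS1 : ∀ u : (ZMod p)ˣ, ∑ e ∈ range q, gaussSum (T ^ (e * (q - 1))) θ * (T ^ e) ↑u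
      = (q : ℂ) * θ ↑u := by
    intro u
    have key : ∀ x : (ZMod p)ˣ, ∑ e ∈ range q, (T ↑(x⁻¹ * u) : ℂ) ^ e
        = if x = u then (q : ℂ) else 0 := by
      intro x
      by_cases hx : x = u
      · subst hx
        simp
      · rw [if_neg hx]
        refine hgeom _ (hTvq _) fun h1 => hx ?_
        exact inv_mul_eq_one.mp (hsep _ h1)
    calc ∑ e ∈ range q, gaussSum (T ^ (e * (q - 1))) θ * (T ^ e) ↑u
        = ∑ e ∈ range q, ∑ x : (ZMod p)ˣ, θ ↑x * (T ↑(x⁻¹ * u) : ℂ) ^ e := by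
          refine Finset.sum_congr rfl fun e _ => ?_
          rw [hgU, Finset.sum_mul]
          refine Finset.sum_congr rfl fun x _ => ?_
          rw [MulChar.pow_apply_coe, MulChar.pow_apply_coe, Units.val_mul, map_mul, hTinv,
            mul_pow, show e * (q - 1) = (q - 1) * e from Nat.mul_comm _ _, pow_mul]
          ring
      _ = ∑ x : (ZMod p)ˣ, ∑ e ∈ range q, θ ↑x * (T ↑(x⁻¹ * u) : ℂ) ^ e := Finset.sum_comm
      _ = ∑ x : (ZMod p)ˣ, θ ↑x * (if x = u then (q : ℂ) else 0) := by
          refine Finset.sum_congr rfl fun x _ => ?_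
          rw [← Finset.mul_sum, key]
      _ = (q : ℂ) * θ ↑u := by
          simp only [mul_ite, mul_zero, Finset.sum_ite_eq', Finset.mem_univ, if_true]
          ring
  -- fifth powers
  have hbij : Function.Bijective (fun u : (ZMod p)ˣ => u ^ 5) := by
    have hc : (Nat.card (ZMod p)ˣ).Coprime 5 := by
      rw [Nat.card_eq_fintype_card, hcard]; exact hcop.symm
    have h := (powCoprime hc).bijective
    simpa [powCoprime] using h
  have h5m_pow : ∀ (e : ℕ) (x : (ZMod p)ˣ), (T ^ e) ↑x = (T ^ (e * m)) ↑(x ^ 5) := by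
    intro e x
    have h1 : (T ^ e) (↑x : ZMod p) = (T ↑x) ^ e := MulChar.pow_apply_coe T e x
    have h2 : (T ^ (e * m)) (↑(x ^ 5) : ZMod p) = (T ↑x) ^ (5 * (e * m)) := by
      rw [MulChar.pow_apply_coe, Units.val_pow_eq_pow_val, map_pow, ← pow_mul]
    rw [h1, h2]
    have hmeq : e ≡ 5 * (e * m) [MOD q] := by
      refine (ZMod.natCast_eq_natCast_iff e (5 * (e * m)) q).mp ?_
      push_cast
      linear_combination -(e : ZMod q) * hm5c
    exact hzmod _ (hTvq x) _ _ hmeq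
  -- Step 2
  have hS2 : ∀ (y : (ZMod p)ˣ) (e : ℕ),
      ∑ x : (ZMod p)ˣ, θ (↑y * (↑x : ZMod p) ^ 5) * (T ^ e) ↑x
      = (T ^ (e * m)) ↑y⁻¹ * gaussSum (T ^ (e * m)) θ := by
    intro y e
    calc ∑ x : (ZMod p)ˣ, θ (↑y * (↑x : ZMod p) ^ 5) * (T ^ e) ↑x
        = ∑ x : (ZMod p)ˣ, θ (↑y * ↑(x ^ 5)) * (T ^ (e * m)) ↑(x ^ 5) := by
          refine Finset.sum_congr rfl fun x _ => ?_
          rw [← h5m_pow, Units.val_pow_eq_pow_val]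
      _ = ∑ x : (ZMod p)ˣ, θ (↑y * ↑x) * (T ^ (e * m)) ↑x :=
          Fintype.sum_bijective _ hbij _ _ (fun x => rfl)
      _ = ∑ x : (ZMod p)ˣ, θ (↑y * ↑(y⁻¹ * x)) * (T ^ (e * m)) ↑(y⁻¹ * x) := by
          rw [← Equiv.sum_comp (Equiv.mulLeft y⁻¹)
            (fun v => θ (↑y * (↑v : ZMod p)) * (T ^ (e * m)) ↑v)]
          simp only [Equiv.coe_mulLeft]
      _ = (T ^ (e * m)) ↑y⁻¹ * gaussSum (T ^ (e * m)) θ := by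
          rw [hgU, Finset.mul_sum]
          refine Finset.sum_congr rfl fun x _ => ?_
          have hyx : (↑y : ZMod p) * ↑(y⁻¹ * x) = ↑x := by
            rw [← Units.val_mul, ← mul_assoc, mul_inv_cancel, one_mul]
          rw [hyx, Units.val_mul, map_mul]
          ring
  -- Step 3
  have hS3 : ∀ e : ℕ, ∑ y : (ZMod p)ˣ, (T ^ e) ↑y * ((T ^ (e * m)) ↑y⁻¹) ^ 5 = (q : ℂ) := by
    intro e
    have hone : ∀ y : (ZMod p)ˣ, (T ^ e) ↑y * ((T ^ (e * m)) ↑y⁻¹) ^ 5 = 1 := by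
      intro y
      have h1 : (T ^ e) (↑y : ZMod p) = (T ↑y) ^ e := MulChar.pow_apply_coe T e y
      have h2 : ((T ^ (e * m)) (↑y⁻¹ : ZMod p)) ^ 5 = (T ↑y) ^ ((q - 1) * (e * m * 5)) := by
        rw [MulChar.pow_apply_coe, hTinv, ← pow_mul, ← pow_mul]
      rw [h1, h2, ← pow_add]
      have hdvd : q ∣ e + (q - 1) * (e * m * 5) := by
        have hz : ((e + (q - 1) * (e * m * 5) : ℕ) : ZMod q) = 0 := by
          push_cast [hq2, ZMod.natCast_self]
          linear_combination -(e : ZMod q) * hm5c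
        exact (ZMod.natCast_eq_zero_iff _ _).mp hz
      obtain ⟨k, hk⟩ := hdvd
      rw [hk, pow_mul, hTvq, one_pow]
    rw [Finset.sum_congr rfl fun y _ => hone y]
    simp [Finset.card_univ, hcard]
  -- the unit -5
  have h5ne : (5 : ZMod p) ≠ 0 := by
    have : ¬ (p ∣ 5) := by
      intro hdvd
      rcases (Nat.prime_dvd_prime_iff_eq (Fact.out : p.Prime) (by norm_num)).mp hdvd with rfl
      exact hp5 rfl
    intro h0
    exact this ((ZMod.natCast_eq_zero_iff 5 p).mp (by exact_mod_cast h0))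
  have hc5 : (-5 : ZMod p) ≠ 0 := by simpa [neg_eq_zero] using h5ne
  set c : (ZMod p)ˣ := Units.mk0 (-5) hc5 with hcdef
  have hcval : (↑c : ZMod p) = -5 := rfl
  -- splitting the additive character
  have hsplit : ∀ (y : (ZMod p)ˣ) (x : Fin 5 → (ZMod p)ˣ),
      θ (↑y * (∑ i, ((x i : ZMod p)) ^ 5 - 5 * ∏ i, (x i : ZMod p)))
      = (∏ i, θ (↑y * (↑(x i) : ZMod p) ^ 5)) * θ ↑(c * y * ∏ i, x i) := by
    intro y x
    have harg : (↑y : ZMod p) * (∑ i, ((x i : ZMod p)) ^ 5 - 5 * ∏ i, (x i : ZMod p))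
        = (∑ i, (↑y : ZMod p) * (↑(x i) : ZMod p) ^ 5) + ↑(c * y * ∏ i, x i) := by
      rw [Units.val_mul, Units.val_mul, Units.coe_prod, hcval, mul_sub, Finset.mul_sum]
      ring
    rw [harg]
    simp only [Fin.sum_univ_five, Fin.prod_univ_five, AddChar.map_add_eq_mul]
  -- converting integer powers of T
  have hzpow : ∀ a : ℕ, T ^ (-(a : ℤ)) = T ^ (a * (q - 1)) := by
    intro a
    rw [zpow_neg, zpow_natCast]
    refine inv_eq_of_mul_eq_one_right ?_
    have hqq : a + a * (q - 1) = q * a := by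
      have h1 : q - 1 + 1 = q := by omega
      calc a + a * (q - 1) = (q - 1 + 1) * a := by ring
        _ = q * a := by rw [h1]
    rw [← pow_add, hqq, pow_mul, hTq, one_pow]
  have hzpow5 : ∀ a : ℕ, T ^ (-(5 * (a : ℤ))) = T ^ (5 * a * (q - 1)) := by
    intro a
    rw [show (5 * (a : ℤ)) = ((5 * a : ℕ) : ℤ) by push_cast; ring, hzpow]
  -- mod-q cast helper
  have hcastmod : ∀ a : ℕ, (((a % q : ℕ)) : ZMod q) = (a : ZMod q) := fun a =>
    ZMod.natCast_mod a q
  -- final reindexing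
  have hS4 : ∑ e ∈ range q, gaussSum (T ^ (e * (q - 1))) θ * (T ^ e) (-5 : ZMod p) *
        gaussSum (T ^ (e * m)) θ ^ 5
      = ∑ e ∈ range q, gaussSum (T ^ (e * (q - 1))) θ ^ 5 * gaussSum (T ^ (5 * e)) θ *
        (T ^ (5 * e * (q - 1))) (-5 : ZMod p) := by
    refine Finset.sum_nbij' (fun e => e * m * (q - 1) % q) (fun e => 5 * e * (q - 1) % q)
      (fun a _ => Finset.mem_range.mpr (Nat.mod_lt _ (by omega)))
      (fun a _ => Finset.mem_range.mpr (Nat.mod_lt _ (by omega))) ?_ ?_ ?_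
    · intro e he
      have h1 : ((5 * (e * m * (q - 1) % q) * (q - 1) : ℕ) : ZMod q) = ((e : ℕ) : ZMod q) := by
        push_cast [hcastmod, hq2, ZMod.natCast_self]
        linear_combination (e : ZMod q) * hm5c
      have h2 := (ZMod.natCast_eq_natCast_iff _ _ _).mp h1
      exact Eq.trans h2 (Nat.mod_eq_of_lt (Finset.mem_range.mp he))
    · intro e he
      have h1 : ((5 * e * (q - 1) % q * m * (q - 1) : ℕ) : ZMod q) = ((e : ℕ) : ZMod q) := by
        push_cast [hcastmod, hq2, ZMod.natCast_self]
        linear_combination (e : ZMod q) * hm5c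
      have h2 := (ZMod.natCast_eq_natCast_iff _ _ _).mp h1
      exact Eq.trans h2 (Nat.mod_eq_of_lt (Finset.mem_range.mp he))
    · intro e _
      have h1 : T ^ (e * (q - 1)) = T ^ (5 * (e * m * (q - 1) % q)) := by
        refine hTcast _ _ ?_
        push_cast [hcastmod, hq2, ZMod.natCast_self]
        linear_combination (e : ZMod q) * hm5c
      have h2 : T ^ (e * m) = T ^ (e * m * (q - 1) % q * (q - 1)) := by
        refine hTcast _ _ ?_
        push_cast [hcastmod, hq2, ZMod.natCast_self]
        ring
      have h3 : T ^ e = T ^ (5 * (e * m * (q - 1) % q) * (q - 1)) := by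
        refine hTcast _ _ ?_
        push_cast [hcastmod, hq2, ZMod.natCast_self]
        linear_combination -(e : ZMod q) * hm5c
      rw [h1, h2, h3]
      ring
  -- main computation
  have hqC : (q : ℂ) ≠ 0 := Nat.cast_ne_zero.mpr hq0
  rw [sum_nonzero_eq_sum_units p]
  apply mul_left_cancel₀ hqC
  calc (q : ℂ) * ∑ y : (ZMod p)ˣ, ∑ x : Fin 5 → (ZMod p)ˣ,
        θ (↑y * (∑ i, ((x i : ZMod p)) ^ 5 - 5 * ∏ i, (x i : ZMod p)))
      = ∑ y : (ZMod p)ˣ, ∑ x : Fin 5 → (ZMod p)ˣ,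
          (∏ i, θ (↑y * (↑(x i) : ZMod p) ^ 5)) * ((q : ℂ) * θ ↑(c * y * ∏ i, x i)) := by
        rw [Finset.mul_sum]
        refine Finset.sum_congr rfl fun y _ => ?_
        rw [Finset.mul_sum]
        refine Finset.sum_congr rfl fun x _ => ?_
        rw [hsplit y x]
        ring
    _ = ∑ y : (ZMod p)ˣ, ∑ x : Fin 5 → (ZMod p)ˣ,
          (∏ i, θ (↑y * (↑(x i) : ZMod p) ^ 5)) *
          (∑ e ∈ range q, gaussSum (T ^ (e * (q - 1))) θ * (T ^ e) ↑(c * y * ∏ i, x i)) := by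
        refine Finset.sum_congr rfl fun y _ => Finset.sum_congr rfl fun x _ => by rw [hS1]
    _ = ∑ y : (ZMod p)ˣ, ∑ x : Fin 5 → (ZMod p)ˣ, ∑ e ∈ range q,
          gaussSum (T ^ (e * (q - 1))) θ * (T ^ e) ↑c *
          ((T ^ e) ↑y * ∏ i, (θ (↑y * (↑(x i) : ZMod p) ^ 5) * (T ^ e) ↑(x i))) := by
        refine Finset.sum_congr rfl fun y _ => Finset.sum_congr rfl fun x _ => ?_
        rw [Finset.mul_sum]
        refine Finset.sum_congr rfl fun e _ => ?_
        have hval : ((T ^ e) : MulChar (ZMod p) ℂ) ↑(c * y * ∏ i, x i)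
            = (T ^ e) ↑c * (T ^ e) ↑y * ∏ i, (T ^ e) (↑(x i) : ZMod p) := by
          rw [Units.val_mul, Units.val_mul, Units.coe_prod, map_mul, map_mul,
            map_prod (T ^ e) (fun i => ((x i : ZMod p))) Finset.univ]
        rw [hval, Finset.prod_mul_distrib]
        ring
    _ = ∑ y : (ZMod p)ˣ, ∑ e ∈ range q, ∑ x : Fin 5 → (ZMod p)ˣ,
          gaussSum (T ^ (e * (q - 1))) θ * (T ^ e) ↑c *
          ((T ^ e) ↑y * ∏ i, (θ (↑y * (↑(x i) : ZMod p) ^ 5) * (T ^ e) ↑(x i))) :=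
        Finset.sum_congr rfl fun y _ => Finset.sum_comm
    _ = ∑ e ∈ range q, ∑ y : (ZMod p)ˣ, ∑ x : Fin 5 → (ZMod p)ˣ,
          gaussSum (T ^ (e * (q - 1))) θ * (T ^ e) ↑c *
          ((T ^ e) ↑y * ∏ i, (θ (↑y * (↑(x i) : ZMod p) ^ 5) * (T ^ e) ↑(x i))) :=
        Finset.sum_comm
    _ = ∑ e ∈ range q, gaussSum (T ^ (e * (q - 1))) θ * (T ^ e) ↑c *
          ∑ y : (ZMod p)ˣ, (T ^ e) ↑y *
            (∑ x : (ZMod p)ˣ, θ (↑y * (↑x : ZMod p) ^ 5) * (T ^ e) ↑x) ^ 5 := by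
        refine Finset.sum_congr rfl fun e _ => ?_
        rw [Finset.mul_sum]
        refine Finset.sum_congr rfl fun y _ => ?_
        rw [← Finset.mul_sum]
        congr 1
        rw [← Finset.mul_sum]
        congr 1
        have hps := Finset.prod_univ_sum (fun _ : Fin 5 => (Finset.univ : Finset (ZMod p)ˣ))
          (fun _ u => θ (↑y * (↑u : ZMod p) ^ 5) * (T ^ e) ↑u)
        rw [Fintype.piFinset_univ] at hps
        rw [← hps, Finset.prod_const, Finset.card_univ, Fintype.card_fin]
    _ = ∑ e ∈ range q, gaussSum (T ^ (e * (q - 1))) θ * (T ^ e) ↑c *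
          (gaussSum (T ^ (e * m)) θ ^ 5 * (q : ℂ)) := by
        refine Finset.sum_congr rfl fun e _ => ?_
        congr 1
        calc ∑ y : (ZMod p)ˣ, (T ^ e) ↑y *
              (∑ x : (ZMod p)ˣ, θ (↑y * (↑x : ZMod p) ^ 5) * (T ^ e) ↑x) ^ 5
            = ∑ y : (ZMod p)ˣ, (T ^ e) ↑y *
              ((T ^ (e * m)) ↑y⁻¹ * gaussSum (T ^ (e * m)) θ) ^ 5 :=
              Finset.sum_congr rfl fun y _ => by rw [hS2]
          _ = gaussSum (T ^ (e * m)) θ ^ 5 *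
              ∑ y : (ZMod p)ˣ, (T ^ e) ↑y * ((T ^ (e * m)) ↑y⁻¹) ^ 5 := by
              rw [Finset.mul_sum]
              exact Finset.sum_congr rfl fun y _ => by ring
          _ = gaussSum (T ^ (e * m)) θ ^ 5 * (q : ℂ) := by rw [hS3]
    _ = (q : ℂ) * ∑ e ∈ range q, gaussSum (T ^ (e * (q - 1))) θ * (T ^ e) (-5 : ZMod p) *
          gaussSum (T ^ (e * m)) θ ^ 5 := by
        rw [Finset.mul_sum]
        refine Finset.sum_congr rfl fun e _ => ?_
        rw [hcval]
        ring
    _ = (q : ℂ) * ∑ e ∈ range q, gaussSum (T ^ (-(e : ℤ))) θ ^ 5 * gaussSum (T ^ (5 * e)) θ *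
          (T ^ (-(5 * (e : ℤ)))) (-5 : ZMod p) := by
        refine congrArg ((q : ℂ) * ·) ?_
        rw [hS4]
        refine Finset.sum_congr rfl fun e _ => ?_
        rw [hzpow, hzpow5]
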